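/- The function H̃ satisfies lim_{q → 0⁺} H̃(q) = 1. -/

import Mathlib

open Filter Set

/-- `w` is the root of `q (z^3 - z) + 1 = 0` with `Im w ≥ 0`, `Re w > 0` having the
smallest real part among all such roots. -/
def IsQtilde (q : ℝ) (w : ℂ) : Prop :=
  (q : ℂ) * (w ^ 3 - w) + 1 = 0 ∧ 0 ≤ w.im ∧ 0 < w.re ∧
    ∀ z : ℂ, (q : ℂ) * (z ^ 3 - z) + 1 = 0 → 0 ≤ z.im → 0 < z.re → w.re ≤ z.re

/-- `H̃(q) = |(q̃ - 1)/(q̃ + 1)| · exp(q · Re(q̃²))` where `q̃` is the distinguished root. -/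
noncomputable def Htilde (q : ℝ) : ℝ :=
  ‖(Classical.epsilon (IsQtilde q) - 1) / (Classical.epsilon (IsQtilde q) + 1)‖ *
    Real.exp (q * ((Classical.epsilon (IsQtilde q)) ^ 2).re)

lemma exists_qtilde {q : ℝ} (hq : 0 < q) (hq' : q < 1/10) : ∃ w, IsQtilde q w := by
  have hq1 : q < 1 := by linarith
  have hcont : ContinuousOn (fun x : ℝ => q*(x^3-x)+1) (Icc (-2/q) 0) := by fun_prop
  have hab : (-2/q : ℝ) ≤ 0 := by
    have h0 : (0:ℝ) < 2/q := by positivity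
    rw [neg_div]; linarith
  have hA : q*((-2/q)^3-(-2/q))+1 ≤ 0 := by
    have h : q*((-2/q)^3-(-2/q))+1 = 3 - 8/q^2 := by field_simp; ring
    rw [h]
    have h2 : (8:ℝ) ≤ 8/q^2 := by
      rw [le_div_iff₀ (by positivity)]; nlinarith
    linarith
  have hB : (0:ℝ) ≤ q*((0:ℝ)^3-0)+1 := by norm_num
  obtain ⟨r, hrmem, hfr⟩ := intermediate_value_Icc hab hcont ⟨hA, hB⟩
  simp only at hfr
  -- r ≤ -2
  have hr2 : r ≤ -2 := by
    by_contra h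
    push_neg at h
    have hr0 : r ≤ 0 := hrmem.2
    have h8 : r - r^3 < 8 := by
      nlinarith [mul_pos (show (0:ℝ) < r+2 by linarith) (show (0:ℝ) < r^2-2*r+4 by nlinarith [sq_nonneg (r-1)])]
    have := mul_lt_mul_of_pos_left h8 hq
    nlinarith
  -- construct the complex root
  set s : ℝ := Real.sqrt (3*r^2 - 4) with hs_def
  have hs_nonneg : 0 ≤ s := Real.sqrt_nonneg _
  have hs2 : s^2 = 3*r^2 - 4 := Real.sq_sqrt (by nlinarith)
  set W : ℂ := ⟨-r/2, s/2⟩ with hW_def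
  have hWre : W.re = -r/2 := rfl
  have hWim : W.im = s/2 := rfl
  have hWc : W = (↑(-r/2) : ℂ) + (↑(s/2) : ℂ) * Complex.I := by
    apply Complex.ext <;> simp [hWre, hWim]
  have hs2c : (s:ℂ)^2 = 3*(r:ℂ)^2 - 4 := by exact_mod_cast congrArg (Complex.ofReal) hs2
  have hquadW : W^2 + (r:ℂ)*W + ((r:ℂ)^2 - 1) = 0 := by
    rw [hWc]
    push_cast
    linear_combination (-(1:ℂ)/4) * hs2c + ((s:ℂ)^2/4) * Complex.I_sq
  have hr0c : (q:ℂ)*((r:ℂ)^3-(r:ℂ))+1 = 0 := by exact_mod_cast congrArg (Complex.ofReal) hfr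
  have key : ∀ z : ℂ, (q:ℂ)*(z^3-z)+1
      = (q:ℂ)*(z-(r:ℂ))*(z^2+(r:ℂ)*z+((r:ℂ)^2-1)) + ((q:ℂ)*((r:ℂ)^3-(r:ℂ))+1) := by
    intro z; ring
  have hWroot : (q:ℂ)*(W^3-W)+1 = 0 := by
    rw [key W, hquadW, hr0c]; ring
  refine ⟨W, hWroot, by rw [hWim]; positivity, by rw [hWre]; linarith, ?_⟩
  intro z hz him hre
  rw [key z, hr0c, add_zero] at hz
  have hqne : (q:ℂ) ≠ 0 := by exact_mod_cast hq.ne'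
  rcases mul_eq_zero.mp hz with h | hquad
  · rcases mul_eq_zero.mp h with h' | h'
    · exact absurd h' hqne
    · have hzr : z = (r:ℂ) := sub_eq_zero.mp h'
      rw [hzr] at hre
      simp only [Complex.ofReal_re] at hre
      linarith
  · -- z satisfies the quadratic; extract re/im parts
    have hre' : (z^2 + (r:ℂ)*z + ((r:ℂ)^2-1)).re = 0 := by rw [hquad]; simp
    have him' : (z^2 + (r:ℂ)*z + ((r:ℂ)^2-1)).im = 0 := by rw [hquad]; simp
    simp [pow_two, Complex.add_re, Complex.add_im, Complex.mul_re, Complex.mul_im] at hre' him'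
    set x := z.re; set y := z.im
    -- him' : 2xy + ry = 0, i.e. y*(2x+r)=0 ; hre' : x²-y²+rx+r²-1 = 0
    have hy : y ≠ 0 := by
      intro h0
      rw [h0] at hre'
      nlinarith [hre', sq_nonneg (2*x+r), mul_nonneg (show (0:ℝ) ≤ -r-2 by linarith) (show (0:ℝ) ≤ -r by linarith)]
    have hx : x = -r/2 := by
      have : y * (2*x + r) = 0 := by linear_combination him'
      rcases mul_eq_zero.mp this with h | h
      · exact absurd h hy
      · linarith
    rw [hWre, hx]


noncomputable def Htilde' (q : ℝ) (u : ℂ) : ℝ :=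
  ‖(u - 1) / (u + 1)‖ * Real.exp (q * (u ^ 2).re)

lemma cube_root_le {a b : ℝ} (ha : 0 ≤ a) (h : a^3 ≤ b) : a ≤ b^((1:ℝ)/3) := by
  have hb : 0 ≤ b := le_trans (by positivity) h
  have key : a = (a^3)^((1:ℝ)/3) := by
    rw [← Real.rpow_natCast a 3, ← Real.rpow_mul ha]; norm_num
  rw [key]
  exact Real.rpow_le_rpow (by positivity) h (by norm_num)

set_option maxHeartbeats 1000000 in
lemma bounds_aux {q : ℝ} (hq : 0 < q) (hq' : q < 1/10) {u : ℂ}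
    (hu : (q : ℂ) * (u ^ 3 - u) + 1 = 0) :
    (1 - 2*(2*q)^((1:ℝ)/3)) * Real.exp (-((4*q)^((1:ℝ)/3)))
      ≤ Htilde' q u ∧
    Htilde' q u ≤ (1 + 4*(2*q)^((1:ℝ)/3)) * Real.exp ((4*q)^((1:ℝ)/3)) := by
  set M := ‖u‖ with hM_def
  have hM0 : 0 ≤ M := norm_nonneg u
  have habs : M^3 * q - M * q ≤ 1 ∧ 1 ≤ M^3 * q + M * q := by
    have h1 : (q:ℂ) * (u^3 - u) = -1 := by linear_combination hu
    have h2 : q * ‖u^3 - u‖ = 1 := by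
      have := congrArg norm h1
      simpa [norm_mul, abs_of_pos hq] using this
    have hub : ‖u^3 - u‖ ≤ M^3 + M := by
      calc ‖u^3 - u‖ ≤ ‖u^3‖ + ‖u‖ :=
            norm_sub_le _ _
        _ = M^3 + M := by rw [norm_pow]
    have hlb : M^3 - M ≤ ‖u^3 - u‖ := by
      have : ‖u^3‖ - ‖u‖ ≤ ‖u^3 - u‖ :=
        norm_sub_norm_le _ _
      rwa [norm_pow] at this
    constructor
    · nlinarith [mul_le_mul_of_nonneg_left hlb hq.le]
    · nlinarith [mul_le_mul_of_nonneg_left hub hq.le]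
  have hq10 : 10 < 1/q := by rw [lt_div_iff₀ hq]; linarith
  have hM2 : 2 ≤ M := by
    by_contra h
    push_neg at h
    have h8 : M^3 < 8 := by
      nlinarith [mul_pos (show (0:ℝ) < 2-M by linarith) (show (0:ℝ) < M^2+2*M+4 by positivity)]
    have h10 : M^3*q + M*q < 10*q := by nlinarith
    linarith [habs.2]
  have hup : q * M^3 ≤ 2 := by
    have h4M : (0:ℝ) ≤ M^3 - 4*M := by
      nlinarith [mul_nonneg (mul_nonneg hM0 (show (0:ℝ) ≤ M-2 by linarith)) (show (0:ℝ) ≤ M+2 by linarith)]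
    nlinarith [habs.1, mul_nonneg hq.le h4M]
  have hlo : 1 ≤ 2 * (q * M^3) := by
    have hMM : (0:ℝ) ≤ M^3 - M := by
      nlinarith [mul_nonneg (mul_nonneg hM0 (show (0:ℝ) ≤ M-1 by linarith)) (show (0:ℝ) ≤ M+1 by linarith)]
    nlinarith [habs.2, mul_nonneg hq.le hMM]
  set g := (2*q)^((1:ℝ)/3) with hg_def
  set h := (4*q)^((1:ℝ)/3) with hh_def
  -- 1/M ≤ g
  have hinvM : 1/M ≤ g := by
    apply cube_root_le (by positivity)
    rw [div_pow, div_le_iff₀ (by positivity)]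
    nlinarith
  -- q * M^2 ≤ h
  have hqM2 : q * M^2 ≤ h := by
    apply cube_root_le (by positivity)
    have e : (q*M^2)^3 = q*(q*M^3)^2 := by ring
    rw [e]
    have hqM3 : 0 ≤ q * M^3 := by positivity
    have h2 : (q*M^3)^2 ≤ 4 := by nlinarith
    nlinarith [mul_le_mul_of_nonneg_left h2 hq.le]
  -- abs bounds on u ± 1
  have hub1 : ‖u - 1‖ ≤ M + 1 := by
    calc ‖u - 1‖ ≤ ‖u‖ + ‖(1:ℂ)‖ := norm_sub_le _ _
      _ = M + 1 := by rw [norm_one]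
  have hub2 : ‖u + 1‖ ≤ M + 1 := by
    calc ‖u + 1‖ ≤ ‖u‖ + ‖(1:ℂ)‖ := norm_add_le _ _
      _ = M + 1 := by rw [norm_one]
  have hlb1 : M - 1 ≤ ‖u - 1‖ := by
    have := norm_sub_norm_le u 1
    rwa [norm_one] at this
  have hlb2 : M - 1 ≤ ‖u + 1‖ := by
    have := norm_sub_norm_le u (-1)
    rw [norm_neg, norm_one, sub_neg_eq_add] at this
    exact this
  have hpos2 : 0 < ‖u + 1‖ := by linarith
  have hRdiv : ‖(u - 1) / (u + 1)‖ = ‖u - 1‖ / ‖u + 1‖ :=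
    norm_div _ _
  set R := ‖(u - 1) / (u + 1)‖ with hR_def
  have hRlow : 1 - 2*g ≤ R := by
    have step1 : (M-1)/(M+1) ≤ R := by
      rw [hRdiv]
      exact div_le_div₀ (norm_nonneg _) hlb1 hpos2 hub2
    have step2 : 1 - 2/M ≤ (M-1)/(M+1) := by
      have e : 1 - 2/M = (M-2)/M := by
        field_simp
      rw [e, div_le_div_iff₀ (by linarith) (by linarith)]
      nlinarith
    have step3 : 2/M ≤ 2*g := by
      have : 2/M = 2*(1/M) := by ring
      rw [this]; linarith
    linarith
  have hRup : R ≤ 1 + 4*g := by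
    have step1 : R ≤ (M+1)/(M-1) := by
      rw [hRdiv]
      exact div_le_div₀ (by positivity) hub1 (by linarith) hlb2
    have step2 : (M+1)/(M-1) ≤ 1 + 4/M := by
      have e : 1 + 4/M = (M+4)/M := by
        field_simp
      rw [e, div_le_div_iff₀ (by linarith) (by linarith)]
      nlinarith
    have step3 : 4/M ≤ 4*g := by
      have : 4/M = 4*(1/M) := by ring
      rw [this]; linarith
    linarith
  -- exp bounds
  have hre : |(u^2).re| ≤ M^2 := by
    calc |(u^2).re| ≤ ‖u^2‖ := Complex.abs_re_le_norm _
      _ = M^2 := by rw [norm_pow]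
  have hexp_up : q * (u^2).re ≤ h := by
    have : q * (u^2).re ≤ q * M^2 := by
      apply mul_le_mul_of_nonneg_left _ hq.le
      exact le_trans (le_abs_self _) hre
    linarith
  have hexp_lo : -h ≤ q * (u^2).re := by
    have h1 : -(M^2) ≤ (u^2).re := neg_le_of_abs_le hre
    have h2 : q * (-(M^2)) ≤ q * (u^2).re := mul_le_mul_of_nonneg_left h1 hq.le
    linarith
  have hR0 : 0 ≤ R := norm_nonneg _
  have hg0 : 0 ≤ 1 + 4*g := by
    have : 0 ≤ g := Real.rpow_nonneg (by linarith) _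
    linarith
  unfold Htilde'
  rw [← hR_def]
  constructor
  · exact mul_le_mul hRlow (Real.exp_le_exp.mpr hexp_lo) (Real.exp_pos _).le hR0
  · exact mul_le_mul hRup (Real.exp_le_exp.mpr hexp_up) (Real.exp_pos _).le hg0

lemma tendsto_cbrt (c : ℝ) (hc : 0 < c) :
    Tendsto (fun q : ℝ => (c*q)^((1:ℝ)/3)) (nhdsWithin 0 (Set.Ioi 0)) (nhds 0) := by
  have h1 : Tendsto (fun q : ℝ => c*q) (nhdsWithin 0 (Set.Ioi 0)) (nhds 0) := by
    have : Tendsto (fun q : ℝ => c*q) (nhds 0) (nhds (c*0)) :=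
      (continuous_const.mul continuous_id).tendsto 0
    simpa using this.mono_left nhdsWithin_le_nhds
  have h2 : ContinuousAt (fun x : ℝ => x^((1:ℝ)/3)) 0 :=
    Real.continuousAt_rpow_const 0 (1/3) (Or.inr (by norm_num))
  have := h2.tendsto.comp h1
  simpa [Function.comp_def, Real.zero_rpow (by norm_num : (1:ℝ)/3 ≠ 0)] using this

lemma lower_tendsto :
    Tendsto (fun q : ℝ => (1 - 2*(2*q)^((1:ℝ)/3)) * Real.exp (-((4*q)^((1:ℝ)/3))))
      (nhdsWithin 0 (Set.Ioi 0)) (nhds 1) := by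
  have h2 := tendsto_cbrt 2 (by norm_num)
  have h4 := tendsto_cbrt 4 (by norm_num)
  have hA : Tendsto (fun q : ℝ => 1 - 2*(2*q)^((1:ℝ)/3)) (nhdsWithin 0 (Set.Ioi 0)) (nhds 1) := by
    have := (h2.const_mul 2).const_sub 1
    simpa using this
  have hB : Tendsto (fun q : ℝ => Real.exp (-((4*q)^((1:ℝ)/3)))) (nhdsWithin 0 (Set.Ioi 0))
      (nhds 1) := by
    have h4n : Tendsto (fun q : ℝ => -((4*q)^((1:ℝ)/3))) (nhdsWithin 0 (Set.Ioi 0)) (nhds 0) := by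
      simpa using h4.neg
    have := (Real.continuous_exp.tendsto 0).comp h4n
    simpa [Function.comp_def] using this
  simpa using hA.mul hB

lemma upper_tendsto :
    Tendsto (fun q : ℝ => (1 + 4*(2*q)^((1:ℝ)/3)) * Real.exp ((4*q)^((1:ℝ)/3)))
      (nhdsWithin 0 (Set.Ioi 0)) (nhds 1) := by
  have h2 := tendsto_cbrt 2 (by norm_num)
  have h4 := tendsto_cbrt 4 (by norm_num)
  have hA : Tendsto (fun q : ℝ => 1 + 4*(2*q)^((1:ℝ)/3)) (nhdsWithin 0 (Set.Ioi 0)) (nhds 1) := by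
    have := (h2.const_mul 4).const_add 1
    simpa using this
  have hB : Tendsto (fun q : ℝ => Real.exp ((4*q)^((1:ℝ)/3))) (nhdsWithin 0 (Set.Ioi 0))
      (nhds 1) := by
    have := (Real.continuous_exp.tendsto 0).comp h4
    simpa [Function.comp_def] using this
  simpa using hA.mul hB

/-- H̃(q) → 1 as q → 0⁺. -/
theorem Htilde_tendsto_zero :
    Tendsto Htilde (nhdsWithin 0 (Set.Ioi 0)) (nhds 1) := by
  have hmem : Ioo (0:ℝ) (1/10) ∈ nhdsWithin (0:ℝ) (Set.Ioi 0) :=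
    Ioo_mem_nhdsGT_of_mem (by norm_num : (0:ℝ) ∈ Ico (0:ℝ) (1/10))
  refine tendsto_of_tendsto_of_tendsto_of_le_of_le' lower_tendsto upper_tendsto ?_ ?_
  · filter_upwards [hmem] with q hq
    have hu := Classical.epsilon_spec (exists_qtilde hq.1 hq.2)
    have he : Htilde q = Htilde' q (Classical.epsilon (IsQtilde q)) := rfl
    rw [he]
    exact (bounds_aux hq.1 hq.2 hu.1).1
  · filter_upwards [hmem] with q hq
    have hu := Classical.epsilon_spec (exists_qtilde hq.1 hq.2)
    have he : Htilde q = Htilde' q (Classical.epsilon (IsQtilde q)) := rfl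
    rw [he]
    exact (bounds_aux hq.1 hq.2 hu.1).2
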